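/- The Margolus-style circuit RY(−π/4) · CX₁ · RY(π/4) · CX₀ · RY(−π/4) · CX₁ · RY(π/4) on three qubits (rotations on the target qubit, CX_k controlled by control qubit k targeting the target qubit) implements a qfree unitary on three qubits: its unitary maps each computational basis state to ±1 times a computational basis state, even though the individual RY gates are not qfree. -/
import Mathlib


open Matrix Kronecker

/-- The RY(θ) rotation gate. -/
noncomputable def RY (θ : ℝ) : Matrix (Fin 2) (Fin 2) ℂ :=
  !![(Real.cos (θ / 2) : ℂ), -(Real.sin (θ / 2) : ℂ);
     (Real.sin (θ / 2) : ℂ), (Real.cos (θ / 2) : ℂ)]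

/-- RY(θ) acting on the target (third) qubit of a three-qubit system. -/
noncomputable def RYfull (θ : ℝ) :
    Matrix ((Fin 2 × Fin 2) × Fin 2) ((Fin 2 × Fin 2) × Fin 2) ℂ :=
  (1 : Matrix (Fin 2 × Fin 2) (Fin 2 × Fin 2) ℂ) ⊗ₖ RY θ

/-- CNOT with control on qubit 0 and target on qubit 2. -/
def CX0 : Matrix ((Fin 2 × Fin 2) × Fin 2) ((Fin 2 × Fin 2) × Fin 2) ℂ :=
  Matrix.of fun x y =>
    if x.1 = y.1 ∧ x.2 = (if y.1.1 = 1 then y.2 + 1 else y.2) then 1 else 0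

/-- CNOT with control on qubit 1 and target on qubit 2. -/
def CX1 : Matrix ((Fin 2 × Fin 2) × Fin 2) ((Fin 2 × Fin 2) × Fin 2) ℂ :=
  Matrix.of fun x y =>
    if x.1 = y.1 ∧ x.2 = (if y.1.2 = 1 then y.2 + 1 else y.2) then 1 else 0

/-- The Margolus circuit RY(−π/4)·CX₁·RY(π/4)·CX₀·RY(−π/4)·CX₁·RY(π/4). -/
noncomputable def Margolus : Matrix ((Fin 2 × Fin 2) × Fin 2) ((Fin 2 × Fin 2) × Fin 2) ℂ :=
  RYfull (-(Real.pi / 4)) * CX1 * RYfull (Real.pi / 4) * CX0 *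
    RYfull (-(Real.pi / 4)) * CX1 * RYfull (Real.pi / 4)

def Xg : Matrix (Fin 2) (Fin 2) ℂ := !![0,1;1,0]

def Zm : Matrix (Fin 2) (Fin 2) ℂ := !![1,0;0,-1]

noncomputable def blk (f : Fin 2 × Fin 2 → Matrix (Fin 2) (Fin 2) ℂ) :
    Matrix ((Fin 2 × Fin 2) × Fin 2) ((Fin 2 × Fin 2) × Fin 2) ℂ :=
  Matrix.of fun x y => if x.1 = y.1 then f x.1 x.2 y.2 else 0

lemma blk_mul (f g : Fin 2 × Fin 2 → Matrix (Fin 2) (Fin 2) ℂ) :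
    blk f * blk g = blk (fun p => f p * g p) := by
  ext ⟨p, t⟩ ⟨q, u⟩
  simp only [blk, Matrix.mul_apply, Matrix.of_apply]
  rw [Fintype.sum_prod_type]
  have key : ∀ r : Fin 2 × Fin 2, (∑ v : Fin 2, (if p = r then f p t v else 0) * (if r = q then g r v u else 0))
      = if p = r then (if p = q then f p t 0 * g p 0 u + f p t 1 * g p 1 u else 0) else 0 := by
    intro r
    by_cases h1 : p = r
    · subst h1; by_cases h2 : p = q <;> simp [h2, Fin.sum_univ_two]
    · simp [h1]
  rw [Finset.sum_congr rfl fun r _ => key r, Finset.sum_ite_eq]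
  simp [Matrix.mul_apply, Fin.sum_univ_two]

lemma RYfull_blk (θ : ℝ) : RYfull θ = blk fun _ => RY θ := by
  ext ⟨p, t⟩ ⟨q, u⟩
  by_cases h : p = q <;> simp [RYfull, blk, Matrix.one_apply, h]

lemma CX0_blk : CX0 = blk fun p => if p.1 = 1 then Xg else 1 := by
  ext ⟨⟨a, b⟩, t⟩ ⟨⟨a', b'⟩, u⟩
  fin_cases a <;> fin_cases b <;> fin_cases a' <;> fin_cases b' <;> fin_cases t <;> fin_cases u <;>
    simp [CX0, blk, Xg, Matrix.one_apply, Prod.ext_iff]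

lemma CX1_blk : CX1 = blk fun p => if p.2 = 1 then Xg else 1 := by
  ext ⟨⟨a, b⟩, t⟩ ⟨⟨a', b'⟩, u⟩
  fin_cases a <;> fin_cases b <;> fin_cases a' <;> fin_cases b' <;> fin_cases t <;> fin_cases u <;>
    simp [CX1, blk, Xg, Matrix.one_apply, Prod.ext_iff]

lemma RY_mul (a b : ℝ) : RY a * RY b = RY (a+b) := by
  have h : (a+b)/2 = a/2 + b/2 := by ring
  ext i j
  fin_cases i <;> fin_cases j <;>
    simp [RY, Matrix.mul_apply, Fin.sum_univ_two, h, Real.cos_add, Real.sin_add] <;> ring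

lemma RY_zero : RY 0 = 1 := by
  ext i j; fin_cases i <;> fin_cases j <;> simp [RY, Matrix.one_apply]

lemma XR (a : ℝ) : Xg * RY a = RY (-a) * Xg := by
  ext i j
  fin_cases i <;> fin_cases j <;>
    simp [RY, Xg, Matrix.mul_apply, Fin.sum_univ_two, Real.cos_neg, Real.sin_neg, neg_div]

lemma XX : Xg * Xg = 1 := by
  ext i j; fin_cases i <;> fin_cases j <;> simp [Xg, Matrix.mul_apply, Fin.sum_univ_two, Matrix.one_apply]

lemma RY_mul' (a b : ℝ) (M : Matrix (Fin 2) (Fin 2) ℂ) : RY a * (RY b * M) = RY (a+b) * M := by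
  rw [← mul_assoc, RY_mul]

lemma XR' (a : ℝ) (M : Matrix (Fin 2) (Fin 2) ℂ) : Xg * (RY a * M) = RY (-a) * (Xg * M) := by
  rw [← mul_assoc, XR, mul_assoc]

lemma XX' (M : Matrix (Fin 2) (Fin 2) ℂ) : Xg * (Xg * M) = M := by
  rw [← mul_assoc, XX, one_mul]

lemma RY_negpi_mul_X : RY (-Real.pi) * Xg = Zm := by
  have h : -Real.pi / 2 = -(Real.pi/2) := by ring
  ext i j
  fin_cases i <;> fin_cases j <;>
    simp [RY, Xg, Zm, Matrix.mul_apply, Fin.sum_univ_two, h, Real.cos_neg, Real.sin_neg]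

noncomputable def F : Fin 2 × Fin 2 → Matrix (Fin 2) (Fin 2) ℂ :=
  fun p => if p = (1, 0) then Xg else if p = (1, 1) then Zm else 1

lemma margolus_blk : Margolus = blk F := by
  rw [Margolus]
  simp only [RYfull_blk, CX0_blk, CX1_blk, blk_mul]
  refine congrArg blk ?_
  funext p
  fin_cases p
  · show RY (-(Real.pi/4)) * 1 * RY (Real.pi/4) * 1 * RY (-(Real.pi/4)) * 1 * RY (Real.pi/4) = F (0,0)
    simp only [mul_one, RY_mul]
    rw [show -(Real.pi/4) + Real.pi/4 + -(Real.pi/4) + Real.pi/4 = (0:ℝ) by ring, RY_zero]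
    simp [F, Prod.ext_iff]
  · show RY (-(Real.pi/4)) * Xg * RY (Real.pi/4) * 1 * RY (-(Real.pi/4)) * Xg * RY (Real.pi/4) = F (0,1)
    simp only [mul_one, mul_assoc, XR, XR', RY_mul, RY_mul', XX, XX', one_mul]
    rw [show -(Real.pi/4) + -(Real.pi/4) + - -(Real.pi/4) + Real.pi/4 = (0:ℝ) by ring, RY_zero]
    simp [F, Prod.ext_iff]
  · show RY (-(Real.pi/4)) * 1 * RY (Real.pi/4) * Xg * RY (-(Real.pi/4)) * 1 * RY (Real.pi/4) = F (1,0)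
    simp only [mul_one, mul_assoc, XR, XR', RY_mul, RY_mul', XX, XX', one_mul]
    rw [show -(Real.pi/4) + Real.pi/4 + - -(Real.pi/4) + -(Real.pi/4) = (0:ℝ) by ring, RY_zero,
      one_mul]
    simp [F, Prod.ext_iff]
  · show RY (-(Real.pi/4)) * Xg * RY (Real.pi/4) * Xg * RY (-(Real.pi/4)) * Xg * RY (Real.pi/4) = F (1,1)
    simp only [mul_one, mul_assoc, XR, XR', RY_mul, RY_mul', XX, XX', one_mul]
    rw [show -(Real.pi/4) + -(Real.pi/4) + -(Real.pi/4) + -(Real.pi/4) = -Real.pi by ring,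
      RY_negpi_mul_X]
    simp [F, Prod.ext_iff]

lemma marg_apply (k x : (Fin 2 × Fin 2) × Fin 2) :
    Margolus k x = if k.1 = x.1 then F x.1 k.2 x.2 else 0 := by
  rw [margolus_blk]
  show (if k.1 = x.1 then F k.1 k.2 x.2 else 0) = _
  by_cases h : k.1 = x.1 <;> simp [h]

/-- The Margolus circuit is qfree: it maps each computational basis state to ±1 times a
computational basis state, even though the individual RY gates are not qfree. -/
theorem stmt13 :
    (∀ x : (Fin 2 × Fin 2) × Fin 2, ∃ (y : (Fin 2 × Fin 2) × Fin 2) (s : ℂ),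
      (s = 1 ∨ s = -1) ∧ ∀ k, Margolus k x = if k = y then s else 0) ∧
    ¬ (∀ j, ∃! i, RY (Real.pi / 4) i j ≠ 0) := by
  constructor
  · rintro ⟨⟨a, b⟩, t⟩
    refine ⟨((a, b), if (a, b) = ((1 : Fin 2), (0 : Fin 2)) then t + 1 else t),
      if (a, b) = ((1 : Fin 2), (1 : Fin 2)) ∧ t = 1 then -1 else 1, ?_, ?_⟩
    · split_ifs <;> simp
    · rintro ⟨⟨a', b'⟩, t'⟩
      rw [marg_apply]
      fin_cases a <;> fin_cases b <;> fin_cases t <;> fin_cases a' <;> fin_cases b' <;>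
        fin_cases t' <;>
        simp [F, Xg, Zm, Matrix.one_apply, Prod.ext_iff]
  · intro h
    obtain ⟨i, hi, hu⟩ := h 0
    have hcpos : 0 < Real.cos (Real.pi / 4 / 2) := by
      apply Real.cos_pos_of_mem_Ioo
      constructor <;> nlinarith [Real.pi_pos]
    have hspos : 0 < Real.sin (Real.pi / 4 / 2) := by
      apply Real.sin_pos_of_pos_of_lt_pi
      · positivity
      · nlinarith [Real.pi_pos]
    have h0 : RY (Real.pi / 4) 0 0 ≠ 0 := by
      have : ((Real.cos (Real.pi / 4 / 2)) : ℂ) ≠ 0 := by exact_mod_cast hcpos.ne'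
      simpa [RY] using this
    have h1 : RY (Real.pi / 4) 1 0 ≠ 0 := by
      have : ((Real.sin (Real.pi / 4 / 2)) : ℂ) ≠ 0 := by exact_mod_cast hspos.ne'
      simpa [RY] using this
    have : (0 : Fin 2) = 1 := (hu 0 h0).trans (hu 1 h1).symm
    exact absurd this (by decide)
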